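/- Let S be a semigroup and let p be an idempotent ultrafilter on S, i.e. p·p = p. For A ⊆ S write A^{-p} := {s ∈ S | {t ∈ S | s·t ∈ A} ∈ p} and A* := A ∩ A^{-p}. Then for every A ∈ p one has A* ∈ p and (A*)* = A* (Galvin Fixpoint Lemma). -/

import Mathlib

attribute [local instance] Ultrafilter.mul

/-- For `A ⊆ S`, `A^{-p} = {s ∈ S | {t ∈ S | s·t ∈ A} ∈ p}`. -/
def minusUF {S : Type*} [Mul S] (p : Ultrafilter S) (A : Set S) : Set S :=
  {s | {t | s * t ∈ A} ∈ p}

/-- `A* = A ∩ A^{-p}`. -/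
def starUF {S : Type*} [Mul S] (p : Ultrafilter S) (A : Set S) : Set S :=
  A ∩ minusUF p A

lemma mem_mulUF {S : Type*} [Mul S] (p q : Ultrafilter S) (A : Set S) :
    A ∈ p * q ↔ minusUF q A ∈ p := by
  have := Ultrafilter.eventually_mul p q (· ∈ A)
  exact this

lemma minus_mem {S : Type*} [Mul S] (p : Ultrafilter S) (hp : p * p = p)
    {A : Set S} (hA : A ∈ p) : minusUF p A ∈ p := by
  rw [← mem_mulUF]; rwa [hp]

/-- Galvin Fixpoint Lemma. -/
theorem galvin_fixpoint {S : Type*} [Semigroup S] (p : Ultrafilter S)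
    (hp : p * p = p) {A : Set S} (hA : A ∈ p) :
    starUF p A ∈ p ∧ starUF p (starUF p A) = starUF p A := by
  have hstar : starUF p A ∈ p := p.toFilter.inter_mem hA (minus_mem p hp hA)
  refine ⟨hstar, ?_⟩
  have hsub : starUF p A ⊆ minusUF p (starUF p A) := by
    intro s hs
    obtain ⟨hsA, hsm⟩ := hs
    have hB : ({t | s * t ∈ A} : Set S) ∈ p := hsm
    have h1 : ({t | s * t ∈ minusUF p A} : Set S) ∈ p := by
      have := minus_mem p hp hB
      have heq : minusUF p {t | s * t ∈ A} = {t | s * t ∈ minusUF p A} := by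
        ext t; simp only [minusUF, Set.mem_setOf_eq, mul_assoc]
      rwa [heq] at this
    have : ({t | s * t ∈ A} ∩ {t | s * t ∈ minusUF p A} : Set S) ∈ p :=
      p.toFilter.inter_mem hB h1
    refine p.toFilter.mem_of_superset this ?_
    intro t ⟨h1', h2'⟩; exact ⟨h1', h2'⟩
  exact Set.inter_eq_self_of_subset_left hsub
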